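/- Let $R$ and $S$ be commutative algebras over a field $k$, $I \subseteq R$ and $J \subseteq S$ ideals, $T = R \otimes_k S$, $P = I + J$. Then for all $r, s \ge 0$ there is an isomorphism of $T$-modules $I^r P^s / I^r P^{s+1} \cong \bigoplus_{i=0}^s (I^{r+i}/I^{r+i+1}) \otimes_k (J^{s-i}/J^{s-i+1})$. -/

import Mathlib

open TensorProduct DirectSum

section RightModule

variable (k : Type*) [CommRing k] (S : Type*) [CommRing S] [Algebra k S]
variable (M N : Type*) [AddCommGroup M] [Module k M] [AddCommGroup N] [Module k N]
  [Module S N] [IsScalarTower k S N]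

/-- The action of `S` on `M ⊗[k] N` through the right factor, as a ring homomorphism to
endomorphisms. -/
noncomputable def rightSMulRingHom : S →+* Module.End k (M ⊗[k] N) where
  toFun s := (Module.toModuleEnd k N s).lTensor M
  map_zero' := by
    show (Module.toModuleEnd k N (0 : S)).lTensor M = 0
    rw [map_zero, LinearMap.lTensor_zero]
  map_one' := by
    show (Module.toModuleEnd k N (1 : S)).lTensor M = 1
    rw [map_one, Module.End.one_eq_id, LinearMap.lTensor_id, Module.End.one_eq_id]
  map_add' s t := by
    show (Module.toModuleEnd k N (s + t)).lTensor M
      = (Module.toModuleEnd k N s).lTensor M + (Module.toModuleEnd k N t).lTensor M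
    rw [map_add, LinearMap.lTensor_add]
  map_mul' s t := by
    show (Module.toModuleEnd k N (s * t)).lTensor M
      = (Module.toModuleEnd k N s).lTensor M * (Module.toModuleEnd k N t).lTensor M
    rw [map_mul, Module.End.mul_eq_comp, LinearMap.lTensor_comp, Module.End.mul_eq_comp]

/-- `M ⊗[k] N` as a module over `S`, acting through the right tensor factor. -/
noncomputable def rightModule : Module S (M ⊗[k] N) :=
  Module.compHom (M ⊗[k] N) (rightSMulRingHom k S M N)

variable (R : Type*) [CommRing R] [Algebra k R] [Module R M] [IsScalarTower k R M]

/-- The `R ⊗[k] S`-module structure on `M ⊗[k] N`, with `R` acting through the left factor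
and `S` through the right factor. -/
noncomputable def mixedModule : Module (R ⊗[k] S) (M ⊗[k] N) := by
  letI := rightModule k S M N
  have hsm : ∀ (s : S) (m : M) (n : N), s • (m ⊗ₜ[k] n) = m ⊗ₜ[k] (s • n) := fun _ _ _ => rfl
  letI : IsScalarTower k S (M ⊗[k] N) := by
    constructor
    intro c s x
    induction x using TensorProduct.induction_on with
    | zero => rw [smul_zero, smul_zero, smul_zero]
    | tmul m n => rw [hsm, hsm, smul_assoc, TensorProduct.tmul_smul]
    | add x y hx hy => rw [smul_add, smul_add, hx, hy, smul_add]
  letI : SMulCommClass R S (M ⊗[k] N) := by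
    constructor
    intro r s x
    induction x using TensorProduct.induction_on with
    | zero => rw [smul_zero, smul_zero, smul_zero]
    | tmul m n =>
        rw [hsm, TensorProduct.smul_tmul', TensorProduct.smul_tmul', hsm]
    | add x y hx hy => rw [smul_add, smul_add, hx, hy, smul_add, smul_add]
  exact TensorProduct.Algebra.module

end RightModule

section MixedHelpers

variable {k : Type*} [CommRing k] {S : Type*} [CommRing S] [Algebra k S]
variable {M N : Type*} [AddCommGroup M] [Module k M] [AddCommGroup N] [Module k N]
  [Module S N] [IsScalarTower k S N]
variable {R : Type*} [CommRing R] [Algebra k R] [Module R M] [IsScalarTower k R M]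

theorem mixedModule_smul_tmul (r : R) (s : S) (m : M) (n : N) :
    letI := mixedModule k S M N R
    (r ⊗ₜ[k] s) • (m ⊗ₜ[k] n) = (r • m) ⊗ₜ[k] (s • n) := rfl

theorem mixedModule_map_smul {Q : Type*} [AddCommGroup Q] [Module (R ⊗[k] S) Q]
    (f : M ⊗[k] N →+ Q)
    (h : ∀ (r : R) (s : S) (m : M) (n : N),
      f ((r • m) ⊗ₜ[k] (s • n)) = (r ⊗ₜ[k] s) • f (m ⊗ₜ[k] n)) :
    letI := mixedModule k S M N R
    ∀ (t : R ⊗[k] S) (z : M ⊗[k] N), f (t • z) = t • f z := by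
  letI := mixedModule k S M N R
  show ∀ (t : R ⊗[k] S) (z : M ⊗[k] N), f (t • z) = t • f z
  have hp : ∀ (r : R) (s : S) (z : M ⊗[k] N), f ((r ⊗ₜ[k] s) • z) = (r ⊗ₜ[k] s) • f z := by
    intro r s z
    induction z using TensorProduct.induction_on with
    | zero => rw [smul_zero, map_zero, smul_zero]
    | tmul m n =>
      rw [mixedModule_smul_tmul, h]
    | add x y hx hy =>
      rw [smul_add, map_add, hx, hy, map_add, smul_add]
  intro t z
  induction t using TensorProduct.induction_on with
  | zero => rw [zero_smul, map_zero, zero_smul]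
  | tmul r s => exact hp r s z
  | add x y hx hy => rw [add_smul, map_add, hx, hy, add_smul]

end MixedHelpers

set_option maxHeartbeats 8000000
set_option synthInstance.maxHeartbeats 400000

/-- With `T = R ⊗[k] S`, `P = I + J` (extensions of `I ⊆ R`, `J ⊆ S`), for all `r s : ℕ`,
`I^r P^s / I^r P^(s+1) ≅ ⨁_{i=0}^{s} (I^(r+i)/I^(r+i+1)) ⊗[k] (J^(s-i)/J^(s-i+1))`
as `T`-modules. -/
theorem quotient_power_decomposition {k R S : Type*} [Field k] [CommRing R] [CommRing S]
    [Algebra k R] [Algebra k S] (I : Ideal R) (J : Ideal S)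
    (I' J' P : Ideal (R ⊗[k] S))
    (hI' : I' = I.map (algebraMap R (R ⊗[k] S)))
    (hJ' : J' = J.map ((Algebra.TensorProduct.includeRight : S →ₐ[k] R ⊗[k] S) : S →+* R ⊗[k] S))
    (hP : P = I' + J') (r s : ℕ) :
    letI : ∀ i : Fin (s + 1),
        Module (R ⊗[k] S)
          ((↥(I ^ (r + (i : ℕ))) ⧸
              Submodule.comap ((I ^ (r + (i : ℕ))).subtype) (I ^ (r + (i : ℕ) + 1)))
            ⊗[k]
           (↥(J ^ (s - (i : ℕ))) ⧸
              Submodule.comap ((J ^ (s - (i : ℕ))).subtype) (J ^ (s - (i : ℕ) + 1)))) :=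
      fun _ => mixedModule k S _ _ R
    Nonempty (
      ((↥(I' ^ r * P ^ s)) ⧸
          Submodule.comap ((I' ^ r * P ^ s).subtype) (I' ^ r * P ^ (s + 1)))
        ≃ₗ[R ⊗[k] S]
      (⨁ i : Fin (s + 1),
        ((↥(I ^ (r + (i : ℕ))) ⧸
            Submodule.comap ((I ^ (r + (i : ℕ))).subtype) (I ^ (r + (i : ℕ) + 1)))
          ⊗[k]
         (↥(J ^ (s - (i : ℕ))) ⧸
            Submodule.comap ((J ^ (s - (i : ℕ))).subtype) (J ^ (s - (i : ℕ) + 1)))))) := by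
  
  letI instM : ∀ i : Fin (s + 1),
      Module (R ⊗[k] S)
        ((↥(I ^ (r + (i : ℕ))) ⧸
            Submodule.comap ((I ^ (r + (i : ℕ))).subtype) (I ^ (r + (i : ℕ) + 1)))
          ⊗[k]
         (↥(J ^ (s - (i : ℕ))) ⧸
            Submodule.comap ((J ^ (s - (i : ℕ))).subtype) (J ^ (s - (i : ℕ) + 1)))) :=
    fun _ => mixedModule k S _ _ R
  classical
  set K : Ideal (R ⊗[k] S) := I' ^ r * P ^ s with hK
  set K' : Ideal (R ⊗[k] S) := I' ^ r * P ^ (s + 1) with hK'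
  -- membership of pure tensors
  have memX : ∀ (n i : ℕ), i ≤ n → ∀ (x : R), x ∈ I ^ (r + i) → ∀ (y : S), y ∈ J ^ (n - i) →
      x ⊗ₜ[k] y ∈ I' ^ r * P ^ n := by
    intro n i hi x hx y hy
    have h1 : x ⊗ₜ[k] (1 : S) ∈ I' ^ (r + i) := by
      rw [hI', ← Ideal.map_pow]
      have := Ideal.mem_map_of_mem (algebraMap R (R ⊗[k] S)) hx
      simpa [Algebra.TensorProduct.algebraMap_apply] using this
    have h2 : (1 : R) ⊗ₜ[k] y ∈ J' ^ (n - i) := by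
      rw [hJ', ← Ideal.map_pow]
      have := Ideal.mem_map_of_mem
        (((Algebra.TensorProduct.includeRight : S →ₐ[k] R ⊗[k] S)) : S →+* R ⊗[k] S) hy
      simpa using this
    have h3 : I' ^ (r + i) * J' ^ (n - i) ≤ I' ^ r * P ^ n := by
      have hIP : I' ≤ P := hP ▸ le_sup_left
      have hJP : J' ≤ P := hP ▸ le_sup_right
      calc I' ^ (r + i) * J' ^ (n - i) = I' ^ r * (I' ^ i * J' ^ (n - i)) := by
            rw [pow_add, mul_assoc]
        _ ≤ I' ^ r * (P ^ i * P ^ (n - i)) :=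
            Ideal.mul_mono le_rfl
              (Ideal.mul_mono (Ideal.pow_right_mono hIP i) (Ideal.pow_right_mono hJP _))
        _ = I' ^ r * P ^ n := by rw [← pow_add, Nat.add_sub_cancel' hi]
    have h4 := h3 (Ideal.mul_mem_mul h1 h2)
    rwa [Algebra.TensorProduct.tmul_mul_tmul, mul_one, one_mul] at h4
  -- the spanning submodules over k
  set X : ℕ → Set (R ⊗[k] S) :=
    fun n => {v | ∃ i ≤ n, ∃ x ∈ I ^ (r + i), ∃ y ∈ J ^ (n - i), v = x ⊗ₜ[k] y} with hX
  set W : ℕ → Submodule k (R ⊗[k] S) := fun n => Submodule.span k (X n) with hW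
  have memW : ∀ (n i : ℕ), i ≤ n → ∀ x ∈ I ^ (r + i), ∀ y ∈ J ^ (n - i), x ⊗ₜ[k] y ∈ W n :=
    fun n i hi x hx y hy => Submodule.subset_span ⟨i, hi, x, hx, y, hy, rfl⟩
  have Wmul : ∀ (n : ℕ) (t : R ⊗[k] S) (v : R ⊗[k] S), v ∈ W n → t * v ∈ W n := by
    intro n t v hv
    induction t using TensorProduct.induction_on with
    | zero => rw [zero_mul]; exact (W n).zero_mem
    | tmul r0 s0 =>
      refine Submodule.span_induction (fun w hw => ?_) (by rw [mul_zero]; exact zero_mem _)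
        (fun a b _ _ ha hb => by rw [mul_add]; exact add_mem ha hb)
        (fun c a _ ha => by rw [mul_smul_comm]; exact Submodule.smul_mem _ c ha) hv
      obtain ⟨i, hi, x, hx, y, hy, rfl⟩ := hw
      rw [Algebra.TensorProduct.tmul_mul_tmul]
      exact memW n i hi _ (Ideal.mul_mem_left _ _ hx) _ (Ideal.mul_mem_left _ _ hy)
    | add t1 t2 h1 h2 => rw [add_mul]; exact add_mem h1 h2
  set idealW : ℕ → Ideal (R ⊗[k] S) := fun n =>
    { carrier := W n
      add_mem' := fun ha hb => (W n).add_mem ha hb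
      zero_mem' := (W n).zero_mem
      smul_mem' := fun t v hv => by simpa [smul_eq_mul] using Wmul n t v hv } with hidW
  have incl : ∀ n : ℕ, I' ^ r * P ^ n ≤ idealW n := by
    intro n
    induction n with
    | zero =>
      rw [pow_zero, mul_one, hI', ← Ideal.map_pow, Ideal.map_le_iff_le_comap]
      intro x hx
      show algebraMap R (R ⊗[k] S) x ∈ W 0
      have hxy : algebraMap R (R ⊗[k] S) x = x ⊗ₜ[k] (1 : S) := by
        simp [Algebra.TensorProduct.algebraMap_apply]
      rw [hxy]
      exact memW 0 0 le_rfl x (by simpa using hx) 1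
        (by rw [Nat.sub_zero, pow_zero, Ideal.one_eq_top]; trivial)
    | succ n ih =>
      have keyI : ∀ a ∈ W n, ∀ b ∈ I', a * b ∈ W (n + 1) := by
        intro a ha
        refine Submodule.span_induction (fun w hw => ?_)
          (fun b _ => by rw [zero_mul]; exact zero_mem _)
          (fun a1 a2 _ _ h1 h2 b hb => by rw [add_mul]; exact add_mem (h1 b hb) (h2 b hb))
          (fun c a1 _ h1 b hb => by rw [smul_mul_assoc]; exact Submodule.smul_mem _ c (h1 b hb)) ha
        obtain ⟨i, hi, x, hx, y, hy, rfl⟩ := hw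
        intro b hb
        rw [hI', ← Ideal.span_eq I, Ideal.map_span] at hb
        refine Submodule.span_induction (fun w' hw' => ?_)
          (by rw [mul_zero]; exact zero_mem _)
          (fun b1 b2 _ _ h1 h2 => by rw [mul_add]; exact add_mem h1 h2)
          (fun t b1 _ h1 => by
            rw [mul_smul_comm]
            simpa [smul_eq_mul] using Wmul (n + 1) t _ h1) hb
        obtain ⟨z, hz, rfl⟩ := hw'
        have hmap : algebraMap R (R ⊗[k] S) z = z ⊗ₜ[k] (1 : S) := by
          simp [Algebra.TensorProduct.algebraMap_apply]
        rw [hmap, Algebra.TensorProduct.tmul_mul_tmul, mul_one]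
        have hxz : x * z ∈ I ^ (r + (i + 1)) := by
          rw [show r + (i + 1) = (r + i) + 1 from rfl, pow_succ]
          exact Ideal.mul_mem_mul hx hz
        have hy' : y ∈ J ^ (n + 1 - (i + 1)) := by rwa [Nat.succ_sub_succ]
        exact memW (n + 1) (i + 1) (by omega) _ hxz _ hy'
      have keyJ : ∀ a ∈ W n, ∀ b ∈ J', a * b ∈ W (n + 1) := by
        intro a ha
        refine Submodule.span_induction (fun w hw => ?_)
          (fun b _ => by rw [zero_mul]; exact zero_mem _)
          (fun a1 a2 _ _ h1 h2 b hb => by rw [add_mul]; exact add_mem (h1 b hb) (h2 b hb))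
          (fun c a1 _ h1 b hb => by rw [smul_mul_assoc]; exact Submodule.smul_mem _ c (h1 b hb)) ha
        obtain ⟨i, hi, x, hx, y, hy, rfl⟩ := hw
        intro b hb
        rw [hJ', ← Ideal.span_eq J, Ideal.map_span] at hb
        refine Submodule.span_induction (fun w' hw' => ?_)
          (by rw [mul_zero]; exact zero_mem _)
          (fun b1 b2 _ _ h1 h2 => by rw [mul_add]; exact add_mem h1 h2)
          (fun t b1 _ h1 => by
            rw [mul_smul_comm]
            simpa [smul_eq_mul] using Wmul (n + 1) t _ h1) hb
        obtain ⟨z, hz, rfl⟩ := hw'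
        have hmap : (((Algebra.TensorProduct.includeRight : S →ₐ[k] R ⊗[k] S)) : S →+* R ⊗[k] S) z
            = (1 : R) ⊗ₜ[k] z := by simp
        rw [hmap, Algebra.TensorProduct.tmul_mul_tmul, mul_one]
        have hyz : y * z ∈ J ^ (n + 1 - i) := by
          rw [Nat.succ_sub hi, pow_succ]
          exact Ideal.mul_mem_mul hy hz
        exact memW (n + 1) i (by omega) _ hx _ hyz
      calc I' ^ r * P ^ (n + 1) = (I' ^ r * P ^ n) * P := by rw [pow_succ, mul_assoc]
        _ ≤ idealW n * P := Ideal.mul_mono ih le_rfl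
        _ ≤ idealW (n + 1) := by
            rw [Ideal.mul_le]
            intro a ha b hb
            rw [hP, Submodule.add_eq_sup] at hb
            obtain ⟨b1, hb1, b2, hb2, rfl⟩ := Submodule.mem_sup.mp hb
            rw [mul_add]
            exact add_mem (keyI a ha b1 hb1) (keyJ a ha b2 hb2)
  
  have WleK : W s ≤ K.restrictScalars k := by
    refine Submodule.span_le.mpr ?_
    rintro w ⟨i, hi, x, hx, y, hy, rfl⟩
    exact memX s i hi x hx y hy
  have keymem : ∀ (i : Fin (s + 1)) (x : ↥(I ^ (r + (i : ℕ)))) (y : ↥(J ^ (s - (i : ℕ)))),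
      (x : R) ⊗ₜ[k] (y : S) ∈ K := fun i x y =>
    memX s i (Nat.lt_succ_iff.mp i.2) x x.2 y y.2
  have memK'₁ : ∀ (i : Fin (s + 1)) (x : R), x ∈ I ^ (r + (i : ℕ) + 1) → ∀ (y : S),
      y ∈ J ^ (s - (i : ℕ)) → x ⊗ₜ[k] y ∈ K' := by
    intro i x hx y hy
    refine memX (s + 1) ((i : ℕ) + 1) (by omega) x (by rwa [← Nat.add_assoc]) y ?_
    rwa [Nat.succ_sub_succ]
  have memK'₂ : ∀ (i : Fin (s + 1)) (x : R), x ∈ I ^ (r + (i : ℕ)) → ∀ (y : S),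
      y ∈ J ^ (s - (i : ℕ) + 1) → x ⊗ₜ[k] y ∈ K' := by
    intro i x hx y hy
    refine memX (s + 1) (i : ℕ) (by omega) x hx y ?_
    rwa [Nat.succ_sub (Nat.lt_succ_iff.mp i.2)]
  obtain ⟨B, hB⟩ :
      ∃ B : ∀ i : Fin (s + 1),
        ↥(I ^ (r + (i : ℕ))) →ₗ[k] (↥(J ^ (s - (i : ℕ))) →ₗ[k] (↥K ⧸ Submodule.comap K.subtype K')),
      ∀ (i : Fin (s + 1)) (x : ↥(I ^ (r + (i : ℕ)))) (y : ↥(J ^ (s - (i : ℕ)))),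
        B i x y = Submodule.Quotient.mk ⟨(x : R) ⊗ₜ[k] (y : S), keymem i x y⟩ := by
    refine ⟨fun i => LinearMap.mk₂ k
      (fun x y => Submodule.Quotient.mk (⟨(x : R) ⊗ₜ[k] (y : S), keymem i x y⟩ : ↥K))
      ?_ ?_ ?_ ?_, fun i x y => rfl⟩
    · intro x1 x2 y
      have e : (⟨((x1 + x2 : ↥(I ^ (r + (i : ℕ)))) : R) ⊗ₜ[k] (y : S), keymem i (x1 + x2) y⟩ : ↥K)
          = ⟨(x1 : R) ⊗ₜ[k] (y : S), keymem i x1 y⟩ + ⟨(x2 : R) ⊗ₜ[k] (y : S), keymem i x2 y⟩ :=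
        Subtype.ext (by simp [TensorProduct.add_tmul])
      show Submodule.Quotient.mk
          (⟨((x1 + x2 : ↥(I ^ (r + (i : ℕ)))) : R) ⊗ₜ[k] (y : S), keymem i (x1 + x2) y⟩ : ↥K) = _
      rw [e, Submodule.Quotient.mk_add]
    · intro c x y
      have e : (⟨((c • x : ↥(I ^ (r + (i : ℕ)))) : R) ⊗ₜ[k] (y : S), keymem i (c • x) y⟩ : ↥K)
          = c • ⟨(x : R) ⊗ₜ[k] (y : S), keymem i x y⟩ :=
        Subtype.ext (by simp [Submodule.coe_smul_of_tower, TensorProduct.smul_tmul'])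
      show Submodule.Quotient.mk
          (⟨((c • x : ↥(I ^ (r + (i : ℕ)))) : R) ⊗ₜ[k] (y : S), keymem i (c • x) y⟩ : ↥K) = _
      rw [e, Submodule.Quotient.mk_smul]
    · intro x y1 y2
      have e : (⟨(x : R) ⊗ₜ[k] ((y1 + y2 : ↥(J ^ (s - (i : ℕ)))) : S), keymem i x (y1 + y2)⟩ : ↥K)
          = ⟨(x : R) ⊗ₜ[k] (y1 : S), keymem i x y1⟩ + ⟨(x : R) ⊗ₜ[k] (y2 : S), keymem i x y2⟩ :=
        Subtype.ext (by simp [TensorProduct.tmul_add])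
      show Submodule.Quotient.mk
          (⟨(x : R) ⊗ₜ[k] ((y1 + y2 : ↥(J ^ (s - (i : ℕ)))) : S), keymem i x (y1 + y2)⟩ : ↥K) = _
      rw [e, Submodule.Quotient.mk_add]
    · intro c x y
      have e : (⟨(x : R) ⊗ₜ[k] ((c • y : ↥(J ^ (s - (i : ℕ)))) : S), keymem i x (c • y)⟩ : ↥K)
          = c • ⟨(x : R) ⊗ₜ[k] (y : S), keymem i x y⟩ :=
        Subtype.ext (by simp [Submodule.coe_smul_of_tower, TensorProduct.tmul_smul])
      show Submodule.Quotient.mk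
          (⟨(x : R) ⊗ₜ[k] ((c • y : ↥(J ^ (s - (i : ℕ)))) : S), keymem i x (c • y)⟩ : ↥K) = _
      rw [e, Submodule.Quotient.mk_smul]
  obtain ⟨C1, hC1⟩ :
      ∃ C1 : ∀ i : Fin (s + 1),
        (↥(I ^ (r + (i : ℕ))) ⧸ Submodule.comap ((I ^ (r + (i : ℕ))).subtype)
            (I ^ (r + (i : ℕ) + 1)))
          →ₗ[k] (↥(J ^ (s - (i : ℕ))) →ₗ[k] (↥K ⧸ Submodule.comap K.subtype K')),
      ∀ (i : Fin (s + 1)) (x : ↥(I ^ (r + (i : ℕ)))) (y : ↥(J ^ (s - (i : ℕ)))),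
        C1 i (Submodule.Quotient.mk x) y
          = Submodule.Quotient.mk ⟨(x : R) ⊗ₜ[k] (y : S), keymem i x y⟩ := by
    have hkillI : ∀ i : Fin (s + 1),
        (Submodule.comap ((I ^ (r + (i : ℕ))).subtype) (I ^ (r + (i : ℕ) + 1))).restrictScalars k ≤
          LinearMap.ker (B i) := by
      intro i x hx
      rw [LinearMap.mem_ker]
      apply LinearMap.ext
      intro y
      rw [hB, LinearMap.zero_apply, Submodule.Quotient.mk_eq_zero]
      exact memK'₁ i x.1 hx y.1 y.2
    refine ⟨fun i => (Submodule.liftQ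
        ((Submodule.comap ((I ^ (r + (i : ℕ))).subtype) (I ^ (r + (i : ℕ) + 1))).restrictScalars k)
        (B i) (hkillI i)).comp
      (Submodule.Quotient.restrictScalarsEquiv k _).symm.toLinearMap, ?_⟩
    intro i x y
    rw [LinearMap.coe_comp, Function.comp_apply, LinearEquiv.coe_coe,
      Submodule.Quotient.restrictScalarsEquiv_symm_mk, Submodule.liftQ_apply, hB]
  obtain ⟨φk, hφk⟩ :
      ∃ φk : ∀ i : Fin (s + 1),
        ((↥(I ^ (r + (i : ℕ))) ⧸ Submodule.comap ((I ^ (r + (i : ℕ))).subtype)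
            (I ^ (r + (i : ℕ) + 1)))
          ⊗[k] (↥(J ^ (s - (i : ℕ))) ⧸ Submodule.comap ((J ^ (s - (i : ℕ))).subtype)
            (J ^ (s - (i : ℕ) + 1))))
          →ₗ[k] (↥K ⧸ Submodule.comap K.subtype K'),
      ∀ (i : Fin (s + 1)) (x : ↥(I ^ (r + (i : ℕ)))) (y : ↥(J ^ (s - (i : ℕ)))),
        φk i (Submodule.Quotient.mk x ⊗ₜ[k] Submodule.Quotient.mk y)
          = Submodule.Quotient.mk ⟨(x : R) ⊗ₜ[k] (y : S), keymem i x y⟩ := by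
    have hkillJ : ∀ i : Fin (s + 1),
        (Submodule.comap ((J ^ (s - (i : ℕ))).subtype) (J ^ (s - (i : ℕ) + 1))).restrictScalars k ≤
          LinearMap.ker (C1 i).flip := by
      intro i y hy
      rw [LinearMap.mem_ker]
      apply LinearMap.ext
      intro xq
      obtain ⟨x, rfl⟩ := Submodule.Quotient.mk_surjective _ xq
      rw [LinearMap.flip_apply, hC1, LinearMap.zero_apply, Submodule.Quotient.mk_eq_zero]
      exact memK'₂ i x.1 x.2 y.1 hy
    refine ⟨fun i => TensorProduct.lift (LinearMap.flip ((Submodule.liftQ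
        ((Submodule.comap ((J ^ (s - (i : ℕ))).subtype) (J ^ (s - (i : ℕ) + 1))).restrictScalars k)
        (C1 i).flip (hkillJ i)).comp
      (Submodule.Quotient.restrictScalarsEquiv k _).symm.toLinearMap)), ?_⟩
    intro i x y
    rw [TensorProduct.lift.tmul, LinearMap.flip_apply, LinearMap.coe_comp, Function.comp_apply,
      LinearEquiv.coe_coe, Submodule.Quotient.restrictScalarsEquiv_symm_mk,
      Submodule.liftQ_apply, LinearMap.flip_apply, hC1]
  
  obtain ⟨φ, hφ⟩ :
      ∃ φ : ∀ i : Fin (s + 1),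
        ((↥(I ^ (r + (i : ℕ))) ⧸ Submodule.comap ((I ^ (r + (i : ℕ))).subtype)
            (I ^ (r + (i : ℕ) + 1)))
          ⊗[k] (↥(J ^ (s - (i : ℕ))) ⧸ Submodule.comap ((J ^ (s - (i : ℕ))).subtype)
            (J ^ (s - (i : ℕ) + 1))))
          →ₗ[R ⊗[k] S] (↥K ⧸ Submodule.comap K.subtype K'),
      ∀ (i : Fin (s + 1)) (z), φ i z = φk i z := by
    refine ⟨fun i =>
      { toFun := φk i
        map_add' := (φk i).map_add
        map_smul' := by
          have h : ∀ (r0 : R) (s0 : S) (m : _) (n : _),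
              (φk i).toAddMonoidHom ((r0 • m) ⊗ₜ[k] (s0 • n))
                = (r0 ⊗ₜ[k] s0) • (φk i).toAddMonoidHom (m ⊗ₜ[k] n) := by
            intro r0 s0 m n
            obtain ⟨x, rfl⟩ := Submodule.Quotient.mk_surjective _ m
            obtain ⟨y, rfl⟩ := Submodule.Quotient.mk_surjective _ n
            rw [LinearMap.toAddMonoidHom_coe, ← Submodule.Quotient.mk_smul,
              ← Submodule.Quotient.mk_smul, hφk, hφk, ← Submodule.Quotient.mk_smul]
            congr 1
            refine Subtype.ext ?_
            show ((r0 • x : ↥(I ^ (r + (i : ℕ)))) : R) ⊗ₜ[k] ((s0 • y : ↥(J ^ (s - (i : ℕ)))) : S)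
              = (r0 ⊗ₜ[k] s0) • ((x : R) ⊗ₜ[k] (y : S))
            simp [Submodule.coe_smul, smul_eq_mul, Algebra.TensorProduct.tmul_mul_tmul]
          exact fun t z => mixedModule_map_smul (φk i).toAddMonoidHom h t z }, fun i z => rfl⟩
  
  obtain ⟨Φ, hΦ⟩ :
      ∃ Φ : (⨁ i : Fin (s + 1),
          ((↥(I ^ (r + (i : ℕ))) ⧸ Submodule.comap ((I ^ (r + (i : ℕ))).subtype)
              (I ^ (r + (i : ℕ) + 1)))
            ⊗[k] (↥(J ^ (s - (i : ℕ))) ⧸ Submodule.comap ((J ^ (s - (i : ℕ))).subtype)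
              (J ^ (s - (i : ℕ) + 1)))))
          →ₗ[R ⊗[k] S] (↥K ⧸ Submodule.comap K.subtype K'),
      ∀ (i : Fin (s + 1)) (z), Φ (DirectSum.of _ i z) = φk i z := by
    refine ⟨DirectSum.toModule _ _ _ φ, fun i z => ?_⟩
    rw [← DirectSum.lof_eq_of (R ⊗[k] S), DirectSum.toModule_lof]
    exact hφ i z
  -- projections
  have hαex : ∀ i : Fin (s + 1),
      ∃ α : R →ₗ[k] (↥(I ^ (r + (i : ℕ))) ⧸ Submodule.comap ((I ^ (r + (i : ℕ))).subtype)
          (I ^ (r + (i : ℕ) + 1))),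
      ∀ x : ↥(I ^ (r + (i : ℕ))), α (x : R) = Submodule.Quotient.mk x := by
    intro i
    obtain ⟨g, hg⟩ := LinearMap.exists_leftInverse_of_injective
      (((I ^ (r + (i : ℕ))).subtype).restrictScalars k)
      (LinearMap.ker_eq_bot.mpr Subtype.val_injective)
    refine ⟨((Submodule.mkQ _).restrictScalars k).comp g, fun x => ?_⟩
    have hgx := LinearMap.congr_fun hg x
    simp only [LinearMap.coe_comp, Function.comp_apply, LinearMap.coe_restrictScalars,
      LinearMap.id_coe, id_eq, Submodule.coe_subtype] at hgx ⊢
    rw [hgx, Submodule.mkQ_apply]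
  have hβex : ∀ i : Fin (s + 1),
      ∃ β : S →ₗ[k] (↥(J ^ (s - (i : ℕ))) ⧸ Submodule.comap ((J ^ (s - (i : ℕ))).subtype)
          (J ^ (s - (i : ℕ) + 1))),
      ∀ y : ↥(J ^ (s - (i : ℕ))), β (y : S) = Submodule.Quotient.mk y := by
    intro i
    obtain ⟨g, hg⟩ := LinearMap.exists_leftInverse_of_injective
      (((J ^ (s - (i : ℕ))).subtype).restrictScalars k)
      (LinearMap.ker_eq_bot.mpr Subtype.val_injective)
    refine ⟨((Submodule.mkQ _).restrictScalars k).comp g, fun y => ?_⟩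
    have hgy := LinearMap.congr_fun hg y
    simp only [LinearMap.coe_comp, Function.comp_apply, LinearMap.coe_restrictScalars,
      LinearMap.id_coe, id_eq, Submodule.coe_subtype] at hgy ⊢
    rw [hgy, Submodule.mkQ_apply]
  choose α hα using hαex
  choose β hβ using hβex
  have hα0 : ∀ (i : Fin (s + 1)) (x : R), x ∈ I ^ (r + (i : ℕ) + 1) → α i x = 0 := by
    intro i x hx
    have hx' : x ∈ I ^ (r + (i : ℕ)) := Ideal.pow_le_pow_right (Nat.le_succ _) hx
    have h1 := hα i ⟨x, hx'⟩
    rw [h1, Submodule.Quotient.mk_eq_zero]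
    exact hx
  have hβ0 : ∀ (i : Fin (s + 1)) (y : S), y ∈ J ^ (s - (i : ℕ) + 1) → β i y = 0 := by
    intro i y hy
    have hy' : y ∈ J ^ (s - (i : ℕ)) := Ideal.pow_le_pow_right (Nat.le_succ _) hy
    have h1 := hβ i ⟨y, hy'⟩
    rw [h1, Submodule.Quotient.mk_eq_zero]
    exact hy
  obtain ⟨Ψ0, hΨ0⟩ :
      ∃ Ψ0 : (R ⊗[k] S) →ₗ[k] (⨁ i : Fin (s + 1),
          ((↥(I ^ (r + (i : ℕ))) ⧸ Submodule.comap ((I ^ (r + (i : ℕ))).subtype)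
              (I ^ (r + (i : ℕ) + 1)))
            ⊗[k] (↥(J ^ (s - (i : ℕ))) ⧸ Submodule.comap ((J ^ (s - (i : ℕ))).subtype)
              (J ^ (s - (i : ℕ) + 1))))),
      ∀ (x : R) (y : S), Ψ0 (x ⊗ₜ[k] y)
        = ∑ i : Fin (s + 1), DirectSum.lof k (Fin (s + 1)) _ i ((α i x) ⊗ₜ[k] (β i y)) := by
    refine ⟨∑ i : Fin (s + 1), (DirectSum.lof k (Fin (s + 1)) _ i).comp
      (TensorProduct.map (α i) (β i)), fun x y => ?_⟩
    rw [LinearMap.sum_apply]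
    exact Finset.sum_congr rfl fun i _ => by rw [LinearMap.comp_apply, TensorProduct.map_tmul]
  
  have hΨ0K' : ∀ v, v ∈ K' → Ψ0 v = 0 := by
    intro v hv
    have hv' : v ∈ W (s + 1) := incl (s + 1) hv
    refine Submodule.span_induction (fun w hw => ?_) (map_zero _)
      (fun a b _ _ ha hb => by rw [map_add, ha, hb, add_zero])
      (fun c a _ ha => by rw [map_smul, ha, smul_zero]) hv'
    obtain ⟨j, hj, x, hx, y, hy, rfl⟩ := hw
    rw [hΨ0]
    refine Finset.sum_eq_zero fun i _ => ?_
    have his : (i : ℕ) ≤ s := Nat.lt_succ_iff.mp i.2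
    rcases lt_or_ge (i : ℕ) j with h | h
    · have hx2 : x ∈ I ^ (r + (i : ℕ) + 1) := Ideal.pow_le_pow_right (by omega) hx
      rw [hα0 i x hx2, TensorProduct.zero_tmul, map_zero]
    · have hy2 : y ∈ J ^ (s - (i : ℕ) + 1) := Ideal.pow_le_pow_right (by omega) hy
      rw [hβ0 i y hy2, TensorProduct.tmul_zero, map_zero]
  obtain ⟨Ψ, hΨmk⟩ :
      ∃ Ψ : (↥K ⧸ Submodule.comap K.subtype K') →ₗ[k] (⨁ i : Fin (s + 1),
          ((↥(I ^ (r + (i : ℕ))) ⧸ Submodule.comap ((I ^ (r + (i : ℕ))).subtype)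
              (I ^ (r + (i : ℕ) + 1)))
            ⊗[k] (↥(J ^ (s - (i : ℕ))) ⧸ Submodule.comap ((J ^ (s - (i : ℕ))).subtype)
              (J ^ (s - (i : ℕ) + 1))))),
      ∀ v : ↥K, Ψ (Submodule.Quotient.mk v) = Ψ0 (v : R ⊗[k] S) := by
    have hkill : ∀ z : ↥K, z ∈ (Submodule.comap K.subtype K').restrictScalars k →
        (Ψ0.comp ((K.subtype).restrictScalars k)) z = 0 := by
      intro z hz
      simp only [LinearMap.comp_apply, LinearMap.coe_restrictScalars, Submodule.coe_subtype]
      exact hΨ0K' z.1 hz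
    letI : AddCommGroup (⨁ i : Fin (s + 1), ((↥(I ^ (r + (i : ℕ))) ⧸ Submodule.comap
        ((I ^ (r + (i : ℕ))).subtype) (I ^ (r + (i : ℕ) + 1)))
          ⊗[k] (↥(J ^ (s - (i : ℕ))) ⧸ Submodule.comap ((J ^ (s - (i : ℕ))).subtype)
            (J ^ (s - (i : ℕ) + 1))))) :=
      @DirectSum.instAddCommGroup (Fin (s + 1)) _
        (fun i => @TensorProduct.addCommGroup k _ _ _ (Submodule.Quotient.addCommGroup _) _ _ _)
    refine ⟨(Submodule.liftQ ((Submodule.comap K.subtype K').restrictScalars k)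
        (M₂ := ⨁ i : Fin (s + 1),
            ((↥(I ^ (r + (i : ℕ))) ⧸ Submodule.comap ((I ^ (r + (i : ℕ))).subtype)
                (I ^ (r + (i : ℕ) + 1)))
              ⊗[k] (↥(J ^ (s - (i : ℕ))) ⧸ Submodule.comap ((J ^ (s - (i : ℕ))).subtype)
                (J ^ (s - (i : ℕ) + 1)))))
        (Ψ0.comp ((K.subtype).restrictScalars k))
        (fun z hz => (LinearMap.mem_ker (f := Ψ0.comp ((K.subtype).restrictScalars k))).mpr
          (hkill z hz))).comp
      (Submodule.Quotient.restrictScalarsEquiv k _).symm.toLinearMap, fun v => ?_⟩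
    rw [LinearMap.coe_comp, Function.comp_apply, LinearEquiv.coe_coe,
      Submodule.Quotient.restrictScalarsEquiv_symm_mk, Submodule.liftQ_apply]
    simp only [LinearMap.comp_apply, LinearMap.coe_restrictScalars, Submodule.coe_subtype]
  have hΨφ : ∀ (i : Fin (s + 1)) (x : ↥(I ^ (r + (i : ℕ)))) (y : ↥(J ^ (s - (i : ℕ)))),
      Ψ (φk i (Submodule.Quotient.mk x ⊗ₜ[k] Submodule.Quotient.mk y))
        = DirectSum.of _ i (Submodule.Quotient.mk x ⊗ₜ[k] Submodule.Quotient.mk y) := by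
    intro i x y
    rw [hφk, hΨmk, hΨ0]
    rw [Finset.sum_eq_single i]
    · rw [hα i x, hβ i y, DirectSum.lof_eq_of]
    · intro j _ hji
      have hvne : (j : ℕ) ≠ (i : ℕ) := fun hc => hji (Fin.ext hc)
      have hjs : (j : ℕ) ≤ s := Nat.lt_succ_iff.mp j.2
      rcases lt_or_gt_of_ne hvne with h | h
      · have hx2 : (x : R) ∈ I ^ (r + (j : ℕ) + 1) := Ideal.pow_le_pow_right (by omega) x.2
        rw [hα0 j _ hx2, TensorProduct.zero_tmul, map_zero]
      · have hy2 : (y : S) ∈ J ^ (s - (j : ℕ) + 1) := Ideal.pow_le_pow_right (by omega) y.2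
        rw [hβ0 j _ hy2, TensorProduct.tmul_zero, map_zero]
    · intro hni; exact absurd (Finset.mem_univ i) hni
  have hE : ∀ d, Ψ (Φ d) = d := by
    intro d
    induction d using DirectSum.induction_on with
    | zero => rw [map_zero, map_zero]
    | of i z =>
      rw [hΦ]
      induction z using TensorProduct.induction_on with
      | zero => rw [map_zero, map_zero, map_zero]
      | tmul m n =>
        obtain ⟨x, rfl⟩ := Submodule.Quotient.mk_surjective _ m
        obtain ⟨y, rfl⟩ := Submodule.Quotient.mk_surjective _ n
        exact hΨφ i x y
      | add z1 z2 h1 h2 => rw [map_add, map_add, h1, h2, map_add]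
    | add a b ha hb => rw [map_add, map_add, ha, hb]
  have hinj : Function.Injective Φ := fun d1 d2 h => by
    have h1 := congrArg Ψ h
    rwa [hE d1, hE d2] at h1
  have hsurj : Function.Surjective Φ := by
    intro q
    obtain ⟨v0, rfl⟩ := Submodule.Quotient.mk_surjective _ q
    obtain ⟨v, hv⟩ := v0
    have hv' : v ∈ W s := incl s hv
    revert hv
    refine Submodule.span_induction (p := fun v _ => ∀ hv : v ∈ K,
        ∃ d, Φ d = Submodule.Quotient.mk ⟨v, hv⟩) (fun w hw => ?_) (fun h0 => ⟨0, ?_⟩)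
      (fun a b ha hb pa pb h0 => ?_) (fun c a ha pa h0 => ?_) hv'
    · obtain ⟨j, hj2, x, hx, y, hy, rfl⟩ := hw
      intro hvK
      refine ⟨DirectSum.of _ (⟨j, by omega⟩ : Fin (s + 1))
        (Submodule.Quotient.mk ⟨x, hx⟩ ⊗ₜ[k] Submodule.Quotient.mk ⟨y, hy⟩), ?_⟩
      rw [hΦ, hφk]
    · rw [map_zero, show (⟨0, h0⟩ : ↥K) = 0 from rfl, Submodule.Quotient.mk_zero]
    · obtain ⟨da, hda⟩ := pa (WleK ha)
      obtain ⟨db, hdb⟩ := pb (WleK hb)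
      refine ⟨da + db, ?_⟩
      rw [map_add, hda, hdb, ← Submodule.Quotient.mk_add]
      exact congrArg _ (Subtype.ext rfl)
    · obtain ⟨da, hda⟩ := pa (WleK ha)
      refine ⟨(algebraMap k (R ⊗[k] S) c) • da, ?_⟩
      rw [map_smul, hda, ← Submodule.Quotient.mk_smul]
      congr 1
      refine Subtype.ext ?_
      show algebraMap k (R ⊗[k] S) c • a = c • a
      rw [algebraMap_smul]
  exact ⟨(LinearEquiv.ofBijective Φ ⟨hinj, hsurj⟩).symm⟩
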